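/- Let V be a finite-dimensional real vector space equipped with a nondegenerate symmetric bilinear form ⟨·,·⟩ of signature (1, m). Let f ∈ V be a nonzero vector with ⟨f,f⟩ = 0, let v ∈ V satisfy ⟨v,v⟩ < 0, and let α > 0 be a real number. Suppose there exists x ∈ V with ⟨x,x⟩ > 0, ⟨v,x⟩ = 0, ⟨x,f⟩ > 0 and ⟨x,f⟩² = α·⟨x,x⟩. Then α·⟨v,v⟩ + ⟨v,f⟩² ≤ 0 (equivalently, −⟨v,f⟩²/⟨v,v⟩ ≤ α). In hyperbolic-geometric terms: every hyperplane (v)⊥ that meets the horosphere {y : ⟨y,y⟩ > 0, ⟨y,f⟩ > 0, ⟨y,f⟩² = α·⟨y,y⟩} satisfies −h_f(v) ≤ α, where h_f(y) := ⟨y,f⟩²/⟨y,y⟩. -/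

import Mathlib

/-- Let `V` be a finite-dimensional real vector space with a
nondegenerate symmetric bilinear form of signature `(1, m)` (given by a basis
in which the Gram matrix is `diag(1, -1, …, -1)`).  Let `f ≠ 0` be isotropic,
let `v` have negative norm and let `α > 0`.  If some `x` with `⟨x,x⟩ > 0`,
`⟨v,x⟩ = 0`, `⟨x,f⟩ > 0` and `⟨x,f⟩² = α⟨x,x⟩` exists, then
`α⟨v,v⟩ + ⟨v,f⟩² ≤ 0`. -/
theorem statement_0 {V : Type*} [AddCommGroup V] [Module ℝ V] (m : ℕ)
    (B : V →ₗ[ℝ] V →ₗ[ℝ] ℝ) (hsymm : ∀ x y, B x y = B y x)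
    (b : Module.Basis (Fin (m + 1)) ℝ V)
    (hb : ∀ i j, B (b i) (b j) =
      if i = j then (if (i : ℕ) = 0 then 1 else -1) else 0)
    (f : V) (hf0 : f ≠ 0) (hff : B f f = 0)
    (v : V) (hv : B v v < 0)
    (α : ℝ) (hα : 0 < α)
    (x : V) (hx : 0 < B x x) (hvx : B v x = 0) (hxf : 0 < B x f)
    (hhoro : (B x f) ^ 2 = α * B x x) :
    α * B v v + (B v f) ^ 2 ≤ 0 := by
  -- coordinate formula for B
  have hB : ∀ y z : V, B y z = b.repr y 0 * b.repr z 0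
      - ∑ i ∈ Finset.univ.erase 0, b.repr y i * b.repr z i := by
    intro y z
    conv_lhs => rw [← b.sum_repr y, ← b.sum_repr z]
    simp only [map_sum, map_smul, LinearMap.sum_apply, LinearMap.smul_apply,
      smul_eq_mul, hb]
    have hinner : ∀ j : Fin (m+1), (∑ i : Fin (m+1), b.repr y i *
        (if i = j then ((if (i:ℕ) = 0 then (1:ℝ) else -1)) else 0))
        = b.repr y j * (if (j:ℕ) = 0 then 1 else -1) := by
      intro j
      rw [Finset.sum_eq_single j]
      · simp
      · intro i _ hij; simp [hij]
      · simp
    simp only [hinner]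
    rw [← Finset.sum_erase_add _ _ (Finset.mem_univ (0 : Fin (m+1)))]
    rw [Finset.sum_congr rfl (fun i hi =>
      show b.repr z i * (b.repr y i * (if (i:ℕ) = 0 then (1:ℝ) else -1))
          = -(b.repr y i * b.repr z i) by
        rw [if_neg (fun h => Finset.ne_of_mem_erase hi (Fin.ext (by simp [h])))]
        ring)]
    simp only [Fin.val_zero, if_pos rfl, if_true, eq_self_iff_true, Finset.sum_neg_distrib]
    ring
  -- key: the orthogonal complement of x is negative semidefinite
  have key : ∀ w : V, B w x = 0 → B w w ≤ 0 := by
    intro w hwx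
    by_contra h
    push_neg at h
    have hx' := hB x x
    have hw' := hB w w
    have hwx' := hB w x
    have cs := Finset.sum_mul_sq_le_sq_mul_sq (Finset.univ.erase (0 : Fin (m+1)))
      (fun i => b.repr w i) (fun i => b.repr x i)
    have hNw : (0:ℝ) ≤ ∑ i ∈ Finset.univ.erase (0 : Fin (m+1)), b.repr w i ^ 2 :=
      Finset.sum_nonneg fun i _ => sq_nonneg _
    have hNx : (0:ℝ) ≤ ∑ i ∈ Finset.univ.erase (0 : Fin (m+1)), b.repr x i ^ 2 :=
      Finset.sum_nonneg fun i _ => sq_nonneg _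
    simp only [← sq] at hx' hw'
    have h1 : (∑ i ∈ Finset.univ.erase (0 : Fin (m+1)), b.repr w i ^ 2)
        < b.repr w 0 ^ 2 := by linarith
    have h2 : (∑ i ∈ Finset.univ.erase (0 : Fin (m+1)), b.repr x i ^ 2)
        < b.repr x 0 ^ 2 := by linarith
    have h3 := mul_lt_mul'' h1 h2 hNw hNx
    have hP : (∑ i ∈ Finset.univ.erase (0 : Fin (m+1)), b.repr w i * b.repr x i)
        = b.repr w 0 * b.repr x 0 := by linarith [hwx]
    rw [hP] at cs
    nlinarith [cs, h3]
  -- construct f' = f - c • x, orthogonal to x, with B f' f' = -α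
  have hxx0 : B x x ≠ 0 := ne_of_gt hx
  set c : ℝ := B x f / B x x with hc
  have hfx : B f x = B x f := hsymm f x
  have hcx : c * B x x = B x f := by rw [hc]; field_simp
  have hcf : c * B x f = α := by
    rw [hc]; field_simp; linear_combination hhoro
  have hxf' : B (f - c • x) x = 0 := by
    rw [map_sub, map_smul, LinearMap.sub_apply, LinearMap.smul_apply,
      smul_eq_mul, hfx, hcx]
    ring
  have hvf' : B v (f - c • x) = B v f := by
    simp only [map_sub, map_smul, smul_eq_mul, hvx]; ring
  have hff' : B (f - c • x) (f - c • x) = -α := by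
    have h1 : B (f - c • x) (f - c • x)
        = B f f - c * B x f - c * (B f x - c * B x x) := by
      simp only [map_sub, map_smul, LinearMap.sub_apply, LinearMap.smul_apply,
        smul_eq_mul]
      try ring
    rw [h1, hff, hfx, hcx]
    linarith [hcf]
  -- reverse Cauchy–Schwarz via t := (B v v) • f' - (B v f') • v
  have htx : B ((B v v) • (f - c • x) - (B v (f - c • x)) • v) x = 0 := by
    rw [map_sub, map_smul, map_smul, LinearMap.sub_apply, LinearMap.smul_apply,
      LinearMap.smul_apply, smul_eq_mul, smul_eq_mul, hxf', hvx]
    ring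
  have htt := key _ htx
  have hexp : B ((B v v) • (f - c • x) - (B v (f - c • x)) • v)
      ((B v v) • (f - c • x) - (B v (f - c • x)) • v)
      = (B v v)^2 * B (f - c • x) (f - c • x) - (B v v) * (B v (f - c • x))^2 := by
    simp only [map_sub, map_smul, LinearMap.sub_apply, LinearMap.smul_apply,
      smul_eq_mul]
    rw [hsymm f v, hsymm x v]
    ring
  rw [hexp, hff', hvf'] at htt
  nlinarith [htt, hv]
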